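/- Let M ⊆ H²(𝔻, ℂ^m) be a closed subspace, E_1 ∈ H²(𝔻, ℂ^m) a unit vector orthogonal to M, W = M ⊖ (M ∩ zH²(𝔻, ℂ^m)) with orthonormal basis {W_1, …, W_r}, and F_0 the m×r matrix-valued function with columns W_1, …, W_r. Suppose M = {F : F = F_0 K_0 + z k_1 E_1 for some (K_0, k_1) ∈ K}, where K ⊆ H²(𝔻, ℂ^r) × H²(𝔻) ≅ H²(𝔻, ℂ^{r+1}) is a closed subspace invariant under the componentwise backward shift S* ⊕ S*, and every F in M has the unique such representation with ‖F‖² = ‖K_0‖² + ‖k_1‖². Then M is nearly S*-invariant with defect 1 and defect space span{E_1}: if F ∈ M and F(0) = 0 then S*F ∈ M ⊕ span{E_1}. -/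

import Mathlib

noncomputable section

open scoped ENNReal ComplexConjugate
open ContinuousLinearMap

abbrev Cm (m : ℕ) := EuclideanSpace ℂ (Fin m)
abbrev H2 (m : ℕ) := lp (fun _ : ℕ => Cm m) 2

namespace Hardy

variable {m r : ℕ}

lemma two_toReal : (2 : ℝ≥0∞).toReal = 2 := by norm_num

def shiftFun (f : ℕ → Cm m) : ℕ → Cm m := fun n => match n with
  | 0 => 0
  | k + 1 => f k

lemma shift_memℓp (f : H2 m) : Memℓp (shiftFun (f : ∀ _, Cm m)) 2 := by
  rw [memℓp_gen_iff (by norm_num)]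
  have hs : Summable fun n : ℕ => ‖(f : ∀ _, Cm m) n‖ ^ (2 : ℝ≥0∞).toReal :=
    (lp.memℓp f).summable (by norm_num)
  have : Summable fun n : ℕ =>
      ‖shiftFun (f : ∀ _, Cm m) (n + 1)‖ ^ (2 : ℝ≥0∞).toReal := hs
  exact (summable_nat_add_iff 1).mp this

/-- The forward shift `S` on the vector-valued Hardy space (Taylor-coefficient model). -/
def S (m : ℕ) : H2 m →L[ℂ] H2 m :=
  LinearMap.mkContinuous
    { toFun := fun f => ⟨shiftFun (f : ∀ _, Cm m), shift_memℓp f⟩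
      map_add' := by
        intro f g
        apply Subtype.ext
        have key : shiftFun (↑(f + g) : ∀ _, Cm m)
            = shiftFun (f : ∀ _, Cm m) + shiftFun (g : ∀ _, Cm m) := by
          funext n
          have h : (shiftFun (f : ∀ _, Cm m) + shiftFun (g : ∀ _, Cm m)) n
              = shiftFun (f : ∀ _, Cm m) n + shiftFun (g : ∀ _, Cm m) n := rfl
          rw [h, lp.coeFn_add]
          cases n with
          | zero => simp [shiftFun]
          | succ k => simp [shiftFun]
        exact key
      map_smul' := by
        intro c f
        apply Subtype.ext
        have key : shiftFun (↑(c • f) : ∀ _, Cm m)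
            = c • shiftFun (f : ∀ _, Cm m) := by
          funext n
          have h : (c • shiftFun (f : ∀ _, Cm m)) n
              = c • shiftFun (f : ∀ _, Cm m) n := rfl
          rw [h, lp.coeFn_smul]
          cases n with
          | zero => simp [shiftFun]
          | succ k => simp [shiftFun]
        exact key }
    1
    (by
      intro f
      simp only [one_mul]
      apply le_of_eq
      have h2 : (0:ℝ) < (2 : ℝ≥0∞).toReal := by norm_num
      rw [lp.norm_eq_tsum_rpow h2, lp.norm_eq_tsum_rpow h2]
      congr 1
      have hsum : Summable fun n : ℕ =>
          ‖shiftFun (f : ∀ _, Cm m) n‖ ^ (2 : ℝ≥0∞).toReal := by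
        rw [← memℓp_gen_iff (by norm_num)]; exact shift_memℓp f
      have key : ∑' n : ℕ, ‖shiftFun (f : ∀ _, Cm m) n‖ ^ (2 : ℝ≥0∞).toReal
          = ∑' n : ℕ, ‖(f : ∀ _, Cm m) n‖ ^ (2 : ℝ≥0∞).toReal := by
        rw [hsum.tsum_eq_zero_add]
        simp [shiftFun]
      exact key)

/-- The backward shift `S*` (the adjoint of the forward shift). -/
def Sadj (m : ℕ) : H2 m →L[ℂ] H2 m := ContinuousLinearMap.adjoint (S m)

/-- `T` is a multiplier (multiplication by an operator-valued analytic function),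
characterized by intertwining the shifts. -/
def IsMultiplier (T : H2 r →L[ℂ] H2 m) : Prop := S m ∘L T = T ∘L S r

/-- `T` is (the multiplication operator of) an inner multiplier: an isometric multiplier. -/
def IsInnerMultiplier (T : H2 r →L[ℂ] H2 m) : Prop :=
  (∀ f, ‖T f‖ = ‖f‖) ∧ IsMultiplier T

/-- The model space `K_Θ = H² ⊖ Θ H²`. -/
def modelSpace (T : H2 r →L[ℂ] H2 m) : Submodule ℂ (H2 m) := (LinearMap.range T.toLinearMap)ᗮ

/-- The constant function with value `v` (Taylor coefficients `(v,0,0,…)`). -/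
def const (v : Cm m) : H2 m := lp.single 2 0 v

/-- The constant function `eᵢ`. -/
def e (m : ℕ) (i : Fin m) : H2 m := const (EuclideanSpace.single i 1)

lemma coord_norm_le (x : Cm m) (i : Fin m) : ‖x i‖ ≤ ‖x‖ := by
  rw [EuclideanSpace.norm_eq]
  have h1 : ‖x i‖ = Real.sqrt (‖x i‖ ^ 2) := by
    rw [Real.sqrt_sq (norm_nonneg _)]
  rw [h1]
  apply Real.sqrt_le_sqrt
  exact Finset.single_le_sum (f := fun j => ‖x j‖ ^ 2)
    (fun j _ => by positivity) (Finset.mem_univ i)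

lemma coord_memℓp (i : Fin m) (f : H2 m) :
    Memℓp (fun n => EuclideanSpace.single (0 : Fin 1) ((f : ∀ _, Cm m) n i)) 2 := by
  rw [memℓp_gen_iff (by norm_num)]
  have hs : Summable fun n : ℕ => ‖(f : ∀ _, Cm m) n‖ ^ (2 : ℝ≥0∞).toReal :=
    (lp.memℓp f).summable (by norm_num)
  apply Summable.of_nonneg_of_le (fun n => by positivity) _ hs
  intro n
  have : ‖EuclideanSpace.single (0 : Fin 1) ((f : ∀ _, Cm m) n i)‖
      = ‖(f : ∀ _, Cm m) n i‖ := by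
    simp [EuclideanSpace.norm_single]
  rw [this]
  have h := coord_norm_le ((f : ∀ _, Cm m) n) i
  exact Real.rpow_le_rpow (norm_nonneg _) h (by norm_num)

/-- The `i`-th coordinate (column) of a `ℂᵐ`-valued Hardy space function, as a scalar
Hardy space function. -/
def coord (i : Fin m) (f : H2 m) : H2 1 :=
  ⟨fun n => EuclideanSpace.single (0 : Fin 1) ((f : ∀ _, Cm m) n i), coord_memℓp i f⟩

/-- A multiplier on `H²(𝔻, ℂᵐ)` is diagonal, `Ψ = diag(ψ₁, …, ψ_m)`, with scalar
multipliers `ψᵢ` represented by the operators `t i`. -/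
def IsDiagonal (T : H2 m →L[ℂ] H2 m) (t : Fin m → (H2 1 →L[ℂ] H2 1)) : Prop :=
  ∀ (f : H2 m) (i : Fin m), coord i (T f) = t i (coord i f)

/-- The analytic function on the disc associated to a scalar Hardy space element. -/
def toFun (f : H2 1) (z : ℂ) : ℂ := ∑' n : ℕ, ((f : ∀ _, Cm 1) n 0) * z ^ n

/-- `F` is a finite Blaschke product on the unit disc. -/
def IsFiniteBlaschke (F : ℂ → ℂ) : Prop :=
  ∃ (k : ℕ) (c : ℂ) (a : Fin k → ℂ), ‖c‖ = 1 ∧ (∀ i, ‖a i‖ < 1) ∧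
    ∀ z ∈ Metric.ball (0 : ℂ) 1,
      F z = c * ∏ i, (z - a i) / (1 - (starRingEnd ℂ) (a i) * z)

/-- `W = M ⊖ (M ∩ zH²)`. -/
def Wspace (M : Submodule ℂ (H2 m)) : Submodule ℂ (H2 m) :=
  M ⊓ (M ⊓ LinearMap.range (S m).toLinearMap)ᗮ

end Hardy

namespace Aux14

open Hardy

variable {m r : ℕ}

lemma S_apply_zero (f : H2 m) : (⇑(S m f) : ∀ _, Cm m) 0 = 0 := rfl

lemma S_apply_succ (f : H2 m) (n : ℕ) : (⇑(S m f) : ∀ _, Cm m) (n + 1) = f n := rfl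

lemma inner_S_S (f g : H2 m) : (inner ℂ (S m f) (S m g) : ℂ) = inner ℂ f g := by
  rw [lp.inner_eq_tsum, lp.inner_eq_tsum]
  have hs : Summable fun n : ℕ => (inner ℂ ((S m f) n) ((S m g) n) : ℂ) :=
    lp.summable_inner _ _
  rw [hs.tsum_eq_zero_add]
  simp only [S_apply_zero, S_apply_succ, inner_zero_left, zero_add]

lemma tail_memℓp (f : H2 m) : Memℓp (fun n : ℕ => (f : ∀ _, Cm m) (n + 1)) 2 := by
  rw [memℓp_gen_iff (by norm_num)]
  have hs : Summable fun n : ℕ => ‖(f : ∀ _, Cm m) n‖ ^ (2 : ℝ≥0∞).toReal :=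
    (lp.memℓp f).summable (by norm_num)
  exact (summable_nat_add_iff 1).mpr hs

/-- The tail (backward shift, computed by hand). -/
def tail (f : H2 m) : H2 m := ⟨fun n => (f : ∀ _, Cm m) (n + 1), tail_memℓp f⟩

lemma const_apply_zero (v : Cm m) : (⇑(const v) : ∀ _, Cm m) 0 = v := by
  rw [Hardy.const]; exact lp.single_apply_self _ _ _

lemma const_apply_succ (v : Cm m) (n : ℕ) : (⇑(const v) : ∀ _, Cm m) (n + 1) = 0 := by
  rw [Hardy.const]; exact lp.single_apply_ne _ _ _ (Nat.succ_ne_zero n)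

lemma decomp (f : H2 m) : f = S m (tail f) + const ((f : ∀ _, Cm m) 0) := by
  apply Subtype.ext
  funext n
  have h : (⇑(S m (tail f) + const ((f : ∀ _, Cm m) 0)) : ∀ _, Cm m) n
      = (S m (tail f)) n + (const ((f : ∀ _, Cm m) 0)) n := by
    rw [lp.coeFn_add]; rfl
  rw [h]
  cases n with
  | zero => rw [S_apply_zero, const_apply_zero, zero_add]
  | succ k =>
    rw [S_apply_succ, const_apply_succ, add_zero]
    rfl

lemma Sadj_S (f : H2 m) : Sadj m (S m f) = f := by
  apply ext_inner_left ℂ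
  intro g
  rw [Sadj, ContinuousLinearMap.adjoint_inner_right]
  exact inner_S_S g f

lemma inner_S_const (g : H2 m) (v : Cm m) : (inner ℂ (S m g) (const v) : ℂ) = 0 := by
  rw [lp.inner_eq_tsum]
  convert tsum_zero with n
  cases n with
  | zero => rw [S_apply_zero]; exact inner_zero_left _
  | succ k => rw [const_apply_succ]; exact inner_zero_right _

lemma Sadj_const (v : Cm m) : Sadj m (const v) = 0 := by
  apply ext_inner_left ℂ
  intro g
  rw [Sadj, ContinuousLinearMap.adjoint_inner_right, inner_zero_right]
  exact inner_S_const g v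

lemma Sadj_eq_tail (f : H2 m) : Sadj m f = tail f := by
  conv_lhs => rw [decomp f]
  rw [map_add, Sadj_S, Sadj_const, add_zero]

lemma decomp' (f : H2 m) : f = S m (Sadj m f) + const ((f : ∀ _, Cm m) 0) := by
  rw [Sadj_eq_tail]; exact decomp f

lemma const_zero : const (0 : Cm m) = 0 := by
  apply Subtype.ext
  funext n
  rw [Hardy.const, lp.single_apply]
  have hz : (⇑(0 : lp (fun _ : ℕ => Cm m) 2) : ∀ _, Cm m) n = 0 := by
    rw [lp.coeFn_zero]; rfl
  rw [hz]
  simp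

lemma mult_S {T : H2 r →L[ℂ] H2 m} (hT : IsMultiplier T) (g : H2 r) :
    S m (T g) = T (S r g) := by
  have := ContinuousLinearMap.ext_iff.mp hT g
  simpa using this

lemma mult_coeff_zero {T : H2 r →L[ℂ] H2 m} (hT : IsMultiplier T) (g : H2 r)
    (hg : (g : ∀ _, Cm r) 0 = 0) : (T g : ∀ _, Cm m) 0 = 0 := by
  have hg' : g = S r (Sadj r g) := by
    conv_lhs => rw [decomp' g]
    rw [hg, const_zero, add_zero]
  rw [hg', ← mult_S hT]
  exact S_apply_zero _

lemma euclid_decomp (v : Cm m) : v = ∑ i, v i • EuclideanSpace.single i (1 : ℂ) := by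
  ext j
  simp [EuclideanSpace.single_apply, Pi.single_apply, Finset.sum_ite_eq', mul_comm]

lemma const_eq_sum (v : Cm m) : const v = ∑ i, v i • e m i := by
  apply Subtype.ext
  funext n
  have h : (⇑(∑ i, v i • e m i) : ∀ _, Cm m) n = ∑ i, v i • (⇑(e m i) : ∀ _, Cm m) n := by
    rw [lp.coeFn_sum, Finset.sum_apply]
    refine Finset.sum_congr rfl fun i _ => ?_
    rw [lp.coeFn_smul]; rfl
  rw [h]
  cases n with
  | zero =>
    rw [const_apply_zero]
    conv_lhs => rw [euclid_decomp v]
    refine Finset.sum_congr rfl fun i _ => ?_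
    rw [e, const_apply_zero]
  | succ k =>
    rw [const_apply_succ]
    symm
    refine Finset.sum_eq_zero fun i _ => ?_
    rw [e, const_apply_succ, smul_zero]

end Aux14

set_option maxHeartbeats 1000000 in
open Hardy in
/-- If every `F ∈ M` has a unique norm-additive representation `F = F₀K₀ + z k₁ E₁` with
`(K₀, k₁)` in a closed `S* ⊕ S*`-invariant subspace `K ⊆ H²(ℂ^r) × H²(𝔻)`, where the
columns `Wᵢ = F₀ eᵢ` form an orthonormal basis of `W = M ⊖ (M ∩ zH²)` and `E₁ ⟂ M` is a
unit vector, then `M` is nearly `S*`-invariant with defect space `span{E₁}`. -/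
theorem stmt_14 (m r : ℕ) (M : Submodule ℂ (H2 m)) (hclosed : IsClosed (M : Set (H2 m)))
    (TF0 : H2 r →L[ℂ] H2 m) (hF0mul : IsMultiplier TF0)
    (hWmem : ∀ i : Fin r, TF0 (e r i) ∈ Wspace M)
    (hWON : Orthonormal ℂ (fun i : Fin r => TF0 (e r i)))
    (hWspan : Submodule.span ℂ (Set.range fun i : Fin r => TF0 (e r i)) = Wspace M)
    (TE1 : H2 1 →L[ℂ] H2 m) (hE1mul : IsMultiplier TE1)
    (E1 : H2 m) (hE1 : TE1 (e 1 0) = E1) (hE1norm : ‖E1‖ = 1)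
    (hE1orth : ∀ F ∈ M, (inner ℂ E1 F : ℂ) = 0)
    (K : Submodule ℂ (H2 r × H2 1)) (hK : IsClosed (K : Set (H2 r × H2 1)))
    (hKinv : ∀ p ∈ K, (Sadj r p.1, Sadj 1 p.2) ∈ K)
    (hrep : ∀ F : H2 m, F ∈ M ↔ ∃ p ∈ K, F = TF0 p.1 + S m (TE1 p.2))
    (hnormid : ∀ p ∈ K, ‖TF0 p.1 + S m (TE1 p.2)‖ ^ 2 = ‖p.1‖ ^ 2 + ‖p.2‖ ^ 2)
    (huniq : ∀ p ∈ K, ∀ q ∈ K,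
      TF0 p.1 + S m (TE1 p.2) = TF0 q.1 + S m (TE1 q.2) → p = q) :
    ∀ F ∈ M, (F : ∀ _ : ℕ, Cm m) 0 = 0 →
      Sadj m F ∈ M ⊔ Submodule.span ℂ ({E1} : Set (H2 m)) := by
  intro F hF hF0
  obtain ⟨p, hpK, hFrep⟩ := (hrep F).mp hF
  -- the value of `K₀` at `0`
  have hG0W : TF0 (const ((p.1 : ∀ _, Cm r) 0)) ∈ Wspace M := by
    rw [Aux14.const_eq_sum, map_sum]
    exact Submodule.sum_mem _ fun i _ => by
      rw [map_smul]; exact Submodule.smul_mem _ _ (hWmem i)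
  have hsub0 : ((p.1 - const ((p.1 : ∀ _, Cm r) 0) : H2 r) : ∀ _, Cm r) 0 = 0 := by
    rw [lp.coeFn_sub, Pi.sub_apply, Aux14.const_apply_zero, sub_self]
  have hT0 : (TF0 (p.1 - const ((p.1 : ∀ _, Cm r) 0)) : ∀ _, Cm m) 0 = 0 :=
    Aux14.mult_coeff_zero hF0mul _ hsub0
  have hF0coe : (F : ∀ _, Cm m) 0 = (TF0 p.1 : ∀ _, Cm m) 0 := by
    rw [hFrep, lp.coeFn_add, Pi.add_apply, Aux14.S_apply_zero, add_zero]
  have hG00 : (TF0 (const ((p.1 : ∀ _, Cm r) 0)) : ∀ _, Cm m) 0 = 0 := by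
    rw [map_sub, lp.coeFn_sub, Pi.sub_apply] at hT0
    have h2 : (TF0 p.1 : ∀ _, Cm m) 0
        = (TF0 (const ((p.1 : ∀ _, Cm r) 0)) : ∀ _, Cm m) 0 := sub_eq_zero.mp hT0
    rw [← h2, ← hF0coe]
    exact hF0
  -- the constant part of `K₀` contributes nothing
  have hG0zero : TF0 (const ((p.1 : ∀ _, Cm r) 0)) = 0 := by
    have hmemrange : TF0 (const ((p.1 : ∀ _, Cm r) 0)) ∈ LinearMap.range (S m).toLinearMap := by
      refine ⟨Aux14.tail (TF0 (const ((p.1 : ∀ _, Cm r) 0))), ?_⟩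
      have hd := Aux14.decomp (TF0 (const ((p.1 : ∀ _, Cm r) 0)))
      rw [hG00, Aux14.const_zero, add_zero] at hd
      exact hd.symm
    obtain ⟨hG0M, hG0orth⟩ := hG0W
    have hzero : (inner ℂ (TF0 (const ((p.1 : ∀ _, Cm r) 0)))
        (TF0 (const ((p.1 : ∀ _, Cm r) 0))) : ℂ) = 0 :=
      hG0orth _ (Submodule.mem_inf.mpr ⟨hG0M, hmemrange⟩)
    exact inner_self_eq_zero.mp hzero
  have hK0dec : TF0 p.1 = S m (TF0 (Sadj r p.1)) := by
    conv_lhs => rw [Aux14.decomp' p.1]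
    rw [map_add, hG0zero, add_zero, ← Aux14.mult_S hF0mul]
  have hw : const ((p.2 : ∀ _, Cm 1) 0)
      = ((p.2 : ∀ _, Cm 1) 0 0) • e 1 0 := by
    rw [Aux14.const_eq_sum]
    exact Fin.sum_univ_one _
  have hk1dec : TE1 p.2 = S m (TE1 (Sadj 1 p.2)) + ((p.2 : ∀ _, Cm 1) 0 0) • E1 := by
    conv_lhs => rw [Aux14.decomp' p.2]
    rw [map_add, ← Aux14.mult_S hE1mul, hw, map_smul, hE1]
  have hq : (Sadj r p.1, Sadj 1 p.2) ∈ K := hKinv p hpK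
  have hGmem : TF0 (Sadj r p.1) + S m (TE1 (Sadj 1 p.2)) ∈ M :=
    (hrep _).mpr ⟨_, hq, rfl⟩
  have hSF : Sadj m F = (TF0 (Sadj r p.1) + S m (TE1 (Sadj 1 p.2)))
      + ((p.2 : ∀ _, Cm 1) 0 0) • E1 := by
    have e1 : F = S m (TF0 (Sadj r p.1)) + S m (TE1 p.2) := by rw [hFrep, hK0dec]
    rw [e1, map_add, Aux14.Sadj_S, Aux14.Sadj_S, hk1dec, add_assoc]
  rw [hSF]
  exact Submodule.add_mem _ (Submodule.mem_sup_left hGmem)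
    (Submodule.mem_sup_right
      (Submodule.smul_mem _ _ (Submodule.mem_span_singleton_self E1)))
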